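/- Let (X, 𝓕, μ) be a σ-finite measure space, Φ an N-function, and φ : X → X a nonsingular measurable map with μ(φ⁻¹(F)) ≤ c μ(F) for every F ∈ 𝓕 and some c > 0. If there exists a measurable set F with 0 < μ(F) < ∞ such that χ_F is a semi-irregular vector for C_φ, i.e., liminf_{n→∞} N_Φ(χ_F ∘ φ^n) = 0 and limsup_{n→∞} N_Φ(χ_F ∘ φ^n) > 0, then the composition operator C_φ on L^Φ(μ) is Li-Yorke chaotic. -/
import Mathlib


open MeasureTheory Filter Topology Set
open scoped ENNReal NNReal

noncomputable section

/-- A Young function: an even convex function `Φ : ℝ → [0,∞]` with `Φ 0 = 0` and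
`Φ x → ∞` as `x → ∞`. -/
structure IsYoungFunction (Φ : ℝ → ℝ≥0∞) : Prop where
  even : ∀ x : ℝ, Φ (-x) = Φ x
  convex : ∀ x y : ℝ, ∀ a b : ℝ≥0, a + b = 1 →
    Φ ((a : ℝ) * x + (b : ℝ) * y) ≤ (a : ℝ≥0∞) * Φ x + (b : ℝ≥0∞) * Φ y
  map_zero : Φ 0 = 0
  tendsto_atTop : Tendsto Φ atTop (nhds ⊤)

/-- An N-function: a finite-valued Young function vanishing exactly at `0`, with
`Φ x / x → 0` as `x → 0⁺` and `Φ x / x → ∞` as `x → ∞`. -/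
structure IsNFunction (Φ : ℝ → ℝ≥0∞) extends IsYoungFunction Φ : Prop where
  lt_top : ∀ x : ℝ, Φ x < ⊤
  eq_zero_iff : ∀ x : ℝ, Φ x = 0 ↔ x = 0
  tendsto_div_zero : Tendsto (fun x : ℝ => Φ x / ENNReal.ofReal x) (nhdsWithin 0 (Set.Ioi 0)) (nhds 0)
  tendsto_div_atTop : Tendsto (fun x : ℝ => Φ x / ENNReal.ofReal x) atTop (nhds ⊤)

/-- The Δ₂-condition, globally: `Φ (2 x) ≤ K Φ x` for all `x ≥ 0`, for some `K > 0`. -/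
def Delta2Global (Φ : ℝ → ℝ≥0∞) : Prop :=
  ∃ K : ℝ≥0, 0 < K ∧ ∀ x : ℝ, 0 ≤ x → Φ (2 * x) ≤ (K : ℝ≥0∞) * Φ x

/-- The generalized inverse `Φ⁻¹ (y) = inf {x ≥ 0 : Φ x > y}` (with `inf ∅ = ∞`). -/
def youngInv (Φ : ℝ → ℝ≥0∞) (y : ℝ≥0∞) : ℝ≥0∞ :=
  ⨅ (x : ℝ) (_ : 0 ≤ x) (_ : y < Φ x), ENNReal.ofReal x

/-- The Luxemburg (gauge) norm `N_Φ (f) = inf {k > 0 : ∫ Φ (f / k) dμ ≤ 1}`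
(with `inf ∅ = ∞`). -/
def luxNorm {X : Type*} [MeasurableSpace X] (Φ : ℝ → ℝ≥0∞) (μ : Measure X)
    (f : X → ℝ) : ℝ≥0∞ :=
  ⨅ (k : ℝ) (_ : 0 < k) (_ : ∫⁻ x, Φ (f x / k) ∂μ ≤ 1), ENNReal.ofReal k

/-- Membership in the Orlicz space `L^Φ(μ)`: `f` is measurable and
`∫ Φ (k f) dμ < ∞` for some `k > 0`. -/
def MemOrlicz {X : Type*} [MeasurableSpace X] (Φ : ℝ → ℝ≥0∞) (μ : Measure X)
    (f : X → ℝ) : Prop :=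
  Measurable f ∧ ∃ k : ℝ, 0 < k ∧ ∫⁻ x, Φ (k * f x) ∂μ < ⊤

/-- Li-Yorke chaos for the composition operator `C_φ f = f ∘ φ` on `L^Φ(μ)`:
there is an uncountable set `S ⊆ L^Φ(μ)` of pairwise not μ-a.e. equal functions such
that every pair of not μ-a.e. equal members is a Li-Yorke pair for `C_φ`. -/
def CompLiYorkeChaotic {X : Type*} [MeasurableSpace X] (Φ : ℝ → ℝ≥0∞) (μ : Measure X)
    (φ : X → X) : Prop :=
  ∃ S : Set (X → ℝ), ¬ S.Countable ∧ (∀ f ∈ S, MemOrlicz Φ μ f) ∧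
    (∀ f ∈ S, ∀ g ∈ S, f ≠ g → ¬ f =ᵐ[μ] g) ∧
    ∀ f ∈ S, ∀ g ∈ S, ¬ f =ᵐ[μ] g →
      atTop.liminf (fun n : ℕ => luxNorm Φ μ ((f - g) ∘ φ^[n])) = 0 ∧
      0 < atTop.limsup (fun n : ℕ => luxNorm Φ μ ((f - g) ∘ φ^[n]))


lemma luxNorm_const_mul {X : Type*} [MeasurableSpace X] {Φ : ℝ → ℝ≥0∞}
    (heven : ∀ x : ℝ, Φ (-x) = Φ x) (μ : Measure X) (f : X → ℝ) {a : ℝ} (ha : a ≠ 0) :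
    luxNorm Φ μ (fun x => a * f x) = ENNReal.ofReal |a| * luxNorm Φ μ f := by
  have habs : 0 < |a| := abs_pos.2 ha
  have key : ∀ (x k : ℝ), Φ (a * x / (|a| * k)) = Φ (x / k) := by
    intro x k
    rcases abs_cases a with ⟨h1, _⟩ | ⟨h1, _⟩
    · rw [h1, mul_div_mul_left x k ha]
    · rw [h1, neg_mul, div_neg, mul_div_mul_left x k ha, heven]
  have h0 : ENNReal.ofReal |a| ≠ 0 := by
    simp only [ne_eq, ENNReal.ofReal_eq_zero, not_le]; exact habs
  have ht : ENNReal.ofReal |a| ≠ ⊤ := ENNReal.ofReal_ne_top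
  have main : luxNorm Φ μ (fun x => a * f x)
      = ⨅ (k : ℝ) (_ : 0 < k) (_ : ∫⁻ x, Φ (f x / k) ∂μ ≤ 1), ENNReal.ofReal (|a| * k) := by
    apply le_antisymm
    · refine le_iInf fun k => le_iInf fun hk => le_iInf fun hcond => ?_
      refine iInf_le_of_le (|a| * k) (iInf_le_of_le (mul_pos habs hk)
        (iInf_le_of_le ?_ le_rfl))
      simpa only [key] using hcond
    · refine le_iInf fun k => le_iInf fun hk => le_iInf fun hcond => ?_
      have hk' : (0:ℝ) < k / |a| := div_pos hk habs
      have hmul : |a| * (k / |a|) = k := by field_simp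
      refine iInf_le_of_le (k / |a|) (iInf_le_of_le hk' (iInf_le_of_le ?_ ?_))
      · have : ∀ x : ℝ, Φ (x / (k / |a|)) = Φ (a * x / k) := by
          intro x
          conv_rhs => rw [← hmul]
          rw [key]
        simpa only [this] using hcond
      · rw [hmul]
  rw [main, luxNorm]
  simp only [ENNReal.ofReal_mul habs.le, ENNReal.mul_iInf_of_ne h0 ht]

lemma ennreal_liminf_const_mul {α : Type*} {f : Filter α} {u : α → ℝ≥0∞} {a : ℝ≥0∞}
    (h0 : a ≠ 0) (ht : a ≠ ⊤) :
    f.liminf (fun x => a * u x) = a * f.liminf u :=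
  (OrderIso.liminf_apply (ENNReal.mulLeftOrderIso a (ENNReal.isUnit_iff.2 ⟨h0, ht⟩))).symm

lemma not_countable_Ioi_real : ¬ (Set.Ioi (0:ℝ)).Countable := by
  intro h
  have h2 : (Real.exp ⁻¹' Set.Ioi (0:ℝ)).Countable := h.preimage Real.exp_injective
  have h3 : Real.exp ⁻¹' Set.Ioi (0:ℝ) = Set.univ := by
    ext x; simp [Real.exp_pos x]
  rw [h3] at h2
  exact Cardinal.not_countable_real h2

/-- Implication (7) ⇒ (1): if some indicator `χ_F`, with `F` measurable of finite positive
measure, is a semi-irregular vector for `C_φ`, then `C_φ` is Li-Yorke chaotic on `L^Φ(μ)`. -/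
theorem compLiYorkeChaotic_of_indicator_semiIrregular
    {X : Type*} [MeasurableSpace X] (μ : Measure X) [SigmaFinite μ]
    (Φ : ℝ → ℝ≥0∞) (hΦ : IsNFunction Φ)
    (φ : X → X) (hφ : Measurable φ) (c : ℝ≥0) (hc : 0 < c)
    (hbound : ∀ F : Set X, MeasurableSet F → μ (φ ⁻¹' F) ≤ (c : ℝ≥0∞) * μ F)
    (F : Set X) (hF : MeasurableSet F) (hF0 : 0 < μ F) (hF1 : μ F < ⊤)
    (hliminf : atTop.liminf
      (fun n : ℕ => luxNorm Φ μ ((F.indicator fun _ => (1 : ℝ)) ∘ φ^[n])) = 0)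
    (hlimsup : 0 < atTop.limsup
      (fun n : ℕ => luxNorm Φ μ ((F.indicator fun _ => (1 : ℝ)) ∘ φ^[n]))) :
    CompLiYorkeChaotic Φ μ φ := by
  classical
  have heven := hΦ.even
  -- the chaotic family: positive multiples of χ_F
  set χ : X → ℝ := F.indicator fun _ => (1:ℝ) with hχ
  set S : Set (X → ℝ) := (fun t : ℝ => F.indicator fun _ => t) '' Set.Ioi 0 with hS
  obtain ⟨x₀, hx₀⟩ : F.Nonempty := nonempty_of_measure_ne_zero hF0.ne'
  have hinj : Set.InjOn (fun t : ℝ => F.indicator fun _ => t) (Set.Ioi 0) := by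
    intro t _ s _ h
    have := congrFun h x₀
    simpa [Set.indicator_of_mem hx₀] using this
  refine ⟨S, ?_, ?_, ?_, ?_⟩
  · intro hcount
    exact not_countable_Ioi_real
      ((Set.mapsTo_image _ _).countable_of_injOn hinj hcount)
  · rintro f ⟨t, _, rfl⟩
    refine ⟨measurable_const.indicator hF, 1, one_pos, ?_⟩
    have hpt : ∀ x, Φ (1 * (F.indicator (fun _ => t) x)) = F.indicator (fun _ => Φ t) x := by
      intro x
      by_cases hx : x ∈ F
      · simp [Set.indicator_of_mem hx]
      · simp [Set.indicator_of_notMem hx, hΦ.map_zero]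
    simp only [hpt]
    rw [lintegral_indicator hF, setLIntegral_const]
    exact ENNReal.mul_lt_top (hΦ.lt_top t) hF1
  · rintro f ⟨t, _, rfl⟩ g ⟨s, _, rfl⟩ hfg hae
    have hts : t ≠ s := fun h => hfg (by rw [h])
    have hset : {x | ¬ (F.indicator (fun _ => t) x = F.indicator (fun _ => s) x)} = F := by
      ext x
      by_cases hx : x ∈ F
      · simp [Set.indicator_of_mem hx, hx, hts]
      · simp [Set.indicator_of_notMem hx, hx]
    have := hae
    rw [Filter.EventuallyEq, ae_iff, hset] at this
    exact hF0.ne' this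
  · rintro f ⟨t, ht0, rfl⟩ g ⟨s, hs0, rfl⟩ hae
    have hts : t ≠ s := by
      rintro rfl
      exact hae (Filter.EventuallyEq.refl _ _)
    have hd : t - s ≠ 0 := sub_ne_zero.2 hts
    have hcomp : ∀ n : ℕ,
        ((F.indicator (fun _ => t) - F.indicator (fun _ => s)) ∘ φ^[n])
          = fun x => (t - s) * ((χ ∘ φ^[n]) x) := by
      intro n
      funext x
      by_cases hx : φ^[n] x ∈ F
      · simp [hχ, Function.comp, Set.indicator_of_mem hx]
      · simp [hχ, Function.comp, Set.indicator_of_notMem hx]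
    have hnorm : ∀ n : ℕ,
        luxNorm Φ μ ((F.indicator (fun _ => t) - F.indicator (fun _ => s)) ∘ φ^[n])
          = ENNReal.ofReal |t - s| * luxNorm Φ μ (χ ∘ φ^[n]) := by
      intro n
      rw [hcomp n]
      exact luxNorm_const_mul heven μ (χ ∘ φ^[n]) hd
    have h0 : ENNReal.ofReal |t - s| ≠ 0 := by
      simp only [ne_eq, ENNReal.ofReal_eq_zero, not_le]
      exact abs_pos.2 hd
    have hT : ENNReal.ofReal |t - s| ≠ ⊤ := ENNReal.ofReal_ne_top
    constructor
    · simp only [hnorm]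
      rw [ennreal_liminf_const_mul h0 hT, hliminf, mul_zero]
    · simp only [hnorm]
      rw [ENNReal.limsup_const_mul_of_ne_top hT]
      exact ENNReal.mul_pos h0 hlimsup.ne'
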